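/- In a trie with N edges and L leaves, the number of maximal palindromes is exactly 2N − L. -/

import Mathlib

variable {α : Type*}

/-- A trie is modeled as a prefix-closed finite set of strings: each node is
identified with its root-to-node path string.  (Distinctness of sibling edge
labels is then automatic.) -/
def PrefixClosed (S : Finset (List α)) : Prop := ∀ v ∈ S, ∀ p, p <+: v → p ∈ S

/-- The suffix of `v` of length `k`, i.e. the path string `str(u, v)` from the
ancestor `u` at depth `|v| - k` down to `v`. -/
def sufx (v : List α) (k : ℕ) : List α := v.drop (v.length - k)

def IsPal (P : List α) : Prop := P.reverse = P

/-- The palindromic occurrence `(v, k)` (the length-`k` suffix of node `v`)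
cannot be extended one character upward and downward: there is no child
`v ++ [a]` of `v` such that the length-`k + 2` suffix of `v ++ [a]` is a
palindrome (the upward extension requires `k + 1 ≤ |v|`). -/
def NoExt (S : Finset (List α)) (v : List α) (k : ℕ) : Prop :=
  ∀ a, v ++ [a] ∈ S → k + 1 ≤ v.length →
    ¬ IsPal ((v ++ [a]).drop (v.length - k - 1))

lemma isPal_short {t : List α} (h : t.length ≤ 1) : IsPal t := by
  match t, h with
  | [], _ => rfl
  | [a], _ => rfl

lemma sufx_length {v : List α} {k : ℕ} (h : k ≤ v.length) : (sufx v k).length = k := by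
  simp [sufx]; omega

lemma sufx_zero (v : List α) : sufx v 0 = [] := by
  simp [sufx]

lemma drop_split (u : List α) (b h : ℕ) (hh : h + b ≤ u.length) :
    u.drop (u.length - (h + b)) = sufx (u.take (u.length - b)) h ++ u.drop (u.length - b) := by
  have hsplit := List.take_append_drop (u.length - b) u
  have step : u.drop (u.length - (h + b)) =
      (u.take (u.length - b) ++ u.drop (u.length - b)).drop (u.length - (h + b)) := by
    rw [hsplit]
  rw [step, List.drop_append_of_le_length (by rw [List.length_take]; omega)]
  have h2 : u.length - (h + b) = (u.take (u.length - b)).length - h := by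
    rw [List.length_take]; omega
  rw [h2, sufx]

lemma construct_pal (u : List α) (b h : ℕ) (hb : b ≤ 1) (hbu : b ≤ u.length)
    (hh : h + b ≤ u.length) :
    IsPal (sufx (u ++ (sufx (u.take (u.length - b)) h).reverse) (2 * h + b)) := by
  have hsl : (sufx (u.take (u.length - b)) h).length = h :=
    sufx_length (by rw [List.length_take]; omega)
  have key : ∀ r : List α, r.length = h →
      sufx (u ++ r) (2 * h + b) = u.drop (u.length - (h + b)) ++ r := by
    intro r hr
    simp only [sufx, List.length_append, hr]
    rw [show u.length + h - (2 * h + b) = u.length - (h + b) from by omega,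
      List.drop_append_of_le_length (by omega)]
  rw [key _ (by simp [hsl]), drop_split u b h hh]
  have ht : (u.drop (u.length - b)).reverse = u.drop (u.length - b) :=
    isPal_short (by simp; omega)
  simp [IsPal, List.reverse_append, ht, List.append_assoc]

lemma decomp_pal (v : List α) (k : ℕ) (hk : k ≤ v.length) (hp : IsPal (sufx v k)) :
    v = v.take (v.length - k / 2) ++
      (sufx (v.take (v.length - (k / 2 + k % 2))) (k / 2)).reverse := by
  have hpl : (sufx v k).length = k := sufx_length hk
  have step1 : (sufx v k).take (k / 2) = sufx (v.take (v.length - (k / 2 + k % 2))) (k / 2) := by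
    show (v.drop (v.length - k)).take (k / 2) =
      (v.take (v.length - (k / 2 + k % 2))).drop ((v.take (v.length - (k / 2 + k % 2))).length - k / 2)
    rw [show (v.take (v.length - (k / 2 + k % 2))).length - k / 2 = v.length - k from by
        simp; omega,
      List.drop_take]
    congr 1
    omega
  have step2 : v.drop (v.length - k / 2) = ((sufx v k).take (k / 2)).reverse := by
    rw [List.reverse_take, hpl, hp]
    show v.drop (v.length - k / 2) = (v.drop (v.length - k)).drop (k - k / 2)
    rw [List.drop_drop]
    congr 1
    omega
  conv_lhs => rw [← List.take_append_drop (v.length - k / 2) v]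
  rw [step2, step1]

lemma arm_take (G : List α) {h1 h2 : ℕ} (hle : h1 ≤ h2) (hG : h2 ≤ G.length) :
    ((sufx G h2).reverse).take h1 = (sufx G h1).reverse := by
  rw [List.take_reverse]
  congr 1
  rw [sufx_length hG]
  show List.drop (h2 - h1) (List.drop (G.length - h2) G) = List.drop (G.length - h1) G
  rw [List.drop_drop]
  congr 1
  omega

lemma mem_facts (v : List α) (k : ℕ) (hk : k ≤ v.length) (hp : IsPal (sufx v k)) :
    v = v.take (v.length - k / 2) ++
      (sufx ((v.take (v.length - k / 2)).take ((v.take (v.length - k / 2)).length - k % 2))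
        (k / 2)).reverse := by
  have h := decomp_pal v k hk hp
  rw [List.length_take, List.take_take]
  rw [show min (min (v.length - k / 2) v.length - k % 2) (v.length - k / 2)
      = v.length - (k / 2 + k % 2) from by omega]
  exact h

lemma no_lt (S : Finset (List α)) (hpc : PrefixClosed S) (u G : List α) (b : ℕ)
    (hb : b ≤ 1) (hbu : b ≤ u.length) (hG : G = u.take (u.length - b))
    {v1 v2 : List α} {k1 h1 h2 : ℕ}
    (hv1 : v1 = u ++ (sufx G h1).reverse) (hv2 : v2 = u ++ (sufx G h2).reverse)
    (hk1 : k1 = 2 * h1 + b) (h2G : h2 ≤ G.length) (hS2 : v2 ∈ S)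
    (hnx : NoExt S v1 k1) (hlt : h1 < h2) : False := by
  have hGl : G.length = u.length - b := by rw [hG, List.length_take]; omega
  have hl1 : (sufx G h1).length = h1 := sufx_length (by omega)
  have hl1' : (sufx G (h1 + 1)).length = h1 + 1 := sufx_length (by omega)
  obtain ⟨d, hd⟩ : ∃ d, ((sufx G (h1 + 1)).reverse).drop h1 = [d] := by
    apply List.length_eq_one_iff.mp
    rw [List.length_drop, List.length_reverse, hl1']; omega
  have hA : (sufx G (h1 + 1)).reverse = (sufx G h1).reverse ++ [d] := by
    conv_lhs => rw [← List.take_append_drop h1 ((sufx G (h1 + 1)).reverse)]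
    rw [hd, arm_take G (Nat.le_succ h1) (by omega)]
  have hpre : v1 ++ [d] = u ++ (sufx G (h1 + 1)).reverse := by
    rw [hv1, hA, List.append_assoc]
  have hprefix2 : (v1 ++ [d]) <+: v2 := by
    rw [hpre, hv2, List.prefix_append_right_inj,
      ← arm_take G (show h1 + 1 ≤ h2 from hlt) h2G]
    exact List.take_prefix _ _
  have hmem : v1 ++ [d] ∈ S := hpc v2 hS2 _ hprefix2
  have hv1l : v1.length = u.length + h1 := by rw [hv1]; simp [hl1]
  have hlen : k1 + 1 ≤ v1.length := by omega
  refine hnx d hmem hlen ?_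
  have hcp := construct_pal u b (h1 + 1) hb hbu (by omega)
  rw [← hG] at hcp
  rw [hpre, show v1.length - k1 - 1
      = (u ++ (sufx G (h1 + 1)).reverse).length - (2 * (h1 + 1) + b) from by
    simp only [List.length_append, List.length_reverse, hl1']; omega]
  exact hcp

/-- In a trie with `N` edges and `L` leaves there are exactly `2N - L` maximal
palindromes (nonempty non-extensible palindromic path strings, together with
the maximal empty palindromes centered at internal non-root nodes). -/
theorem count_maximal_palindromes_in_trie (S : Finset (List α))
    (hroot : ([] : List α) ∈ S) (hpc : PrefixClosed S) :
    {p : List α × ℕ | p.1 ∈ S ∧ p.2 ≤ p.1.length ∧ IsPal (sufx p.1 p.2) ∧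
        NoExt S p.1 p.2 ∧
        (p.2 = 0 → p.1 ≠ [] ∧ ∃ a, p.1 ++ [a] ∈ S)}.ncard
      = 2 * (S.card - 1) - {v : List α | v ∈ S ∧ ∀ a, v ++ [a] ∉ S}.ncard := by
  classical
  set M : Set (List α × ℕ) := {p : List α × ℕ | p.1 ∈ S ∧ p.2 ≤ p.1.length ∧
      IsPal (sufx p.1 p.2) ∧ NoExt S p.1 p.2 ∧
      (p.2 = 0 → p.1 ≠ [] ∧ ∃ a, p.1 ++ [a] ∈ S)} with hMdef
  set Lv : Set (List α) := {v : List α | v ∈ S ∧ ∀ a, v ++ [a] ∉ S} with hLvdef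
  have hMmem : ∀ v k, (v, k) ∈ M ↔ (v ∈ S ∧ k ≤ v.length ∧ IsPal (sufx v k) ∧
      NoExt S v k ∧ (k = 0 → v ≠ [] ∧ ∃ a, v ++ [a] ∈ S)) := fun v k => Iff.rfl
  by_cases hdeg : ∀ x ∈ S, x = []
  · have hM : M = ∅ := by
      ext ⟨v, k⟩
      simp only [Set.mem_empty_iff_false, iff_false, hMmem]
      rintro ⟨hvS, hkl, -, -, h0⟩
      have hv : v = [] := hdeg v hvS
      subst hv
      simp only [List.length_nil, Nat.le_zero] at hkl
      exact (h0 hkl).1 rfl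
    have hS : S = {[]} :=
      Finset.eq_singleton_iff_unique_mem.mpr ⟨hroot, fun x hx => hdeg x hx⟩
    rw [hM, hS]
    simp
  · push_neg at hdeg
    obtain ⟨x, hxS, hxne⟩ := hdeg
    obtain ⟨c, t, rfl⟩ := List.exists_cons_of_ne_nil hxne
    have hrc : [c] ∈ S := hpc _ hxS [c] ⟨t, rfl⟩
    set Φ : List α × ℕ → List α × ℕ :=
      fun p => (p.1.take (p.1.length - p.2 / 2), p.2 % 2) with hΦ
    set A : Set (List α) := {u : List α | u ∈ S ∧ u ≠ []} with hAdef
    set B : Set (List α) := {u : List α | u ∈ S ∧ u ≠ [] ∧ ∃ a, u ++ [a] ∈ S} with hBdef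
    set T : Set (List α × ℕ) := ((fun u => (u, 1)) '' A) ∪ ((fun u => (u, 0)) '' B) with hTdef
    have hT_mem : ∀ u j, u ∈ S → u ≠ [] → j ≤ 1 → (j = 0 → ∃ a, u ++ [a] ∈ S) →
        (u, j) ∈ T := by
      intro u j huS hune hj h0
      interval_cases j
      · exact Or.inr ⟨u, ⟨huS, hune, h0 rfl⟩, rfl⟩
      · exact Or.inl ⟨u, ⟨huS, hune⟩, rfl⟩
    -- MapsTo
    have hmaps : Set.MapsTo Φ M T := by
      rintro ⟨v, k⟩ hm
      obtain ⟨hvS, hkl, hpal, hnx, h0⟩ := (hMmem v k).mp hm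
      have huS : v.take (v.length - k / 2) ∈ S := hpc v hvS _ (List.take_prefix _ _)
      have hul : (v.take (v.length - k / 2)).length = v.length - k / 2 := by
        rw [List.length_take]; omega
      have hune : v.take (v.length - k / 2) ≠ [] := by
        rcases Nat.eq_zero_or_pos k with hk0 | hkpos
        · subst hk0
          simpa using (h0 rfl).1
        · exact List.ne_nil_of_length_pos (by omega)
      have hchild : k % 2 = 0 → ∃ a, v.take (v.length - k / 2) ++ [a] ∈ S := by
        intro hb
        rcases Nat.eq_zero_or_pos k with hk0 | hkpos
        · subst hk0
          simpa using (h0 rfl).2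
        · have hm2 : v.length - k / 2 < v.length := by omega
          refine ⟨v[v.length - k / 2]'hm2, hpc v hvS _ ?_⟩
          have h1 : v.take (v.length - k / 2 + 1)
              = v.take (v.length - k / 2) ++ [v[v.length - k / 2]'hm2] := by
            rw [List.take_succ, List.getElem?_eq_getElem hm2]
            simp
          rw [← h1]
          exact List.take_prefix _ _
      exact hT_mem _ _ huS hune (by omega) hchild
    -- InjOn
    have hinj : Set.InjOn Φ M := by
      rintro ⟨v1, k1⟩ hm1 ⟨v2, k2⟩ hm2 heq
      obtain ⟨hvS1, hkl1, hpal1, hnx1, h01⟩ := (hMmem v1 k1).mp hm1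
      obtain ⟨hvS2, hkl2, hpal2, hnx2, h02⟩ := (hMmem v2 k2).mp hm2
      simp only [hΦ, Prod.mk.injEq] at heq
      obtain ⟨hu, hb⟩ := heq
      have hd1 := mem_facts v1 k1 hkl1 hpal1
      have hd2 := mem_facts v2 k2 hkl2 hpal2
      rw [← hu, ← hb] at hd2
      have hul1 : (v1.take (v1.length - k1 / 2)).length = v1.length - k1 / 2 := by
        rw [List.length_take]; omega
      have hul2 : (v1.take (v1.length - k1 / 2)).length = v2.length - k2 / 2 := by
        rw [hu, List.length_take]; omega
      have hGL : ((v1.take (v1.length - k1 / 2)).take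
          ((v1.take (v1.length - k1 / 2)).length - k1 % 2)).length
          = (v1.take (v1.length - k1 / 2)).length - k1 % 2 := by
        rw [List.length_take]; omega
      rcases lt_trichotomy (k1 / 2) (k2 / 2) with hlt | heqh | hlt
      · exact (no_lt S hpc _ _ (k1 % 2) (by omega) (by omega) rfl
          hd1 hd2 (by omega) (by omega) hvS2 hnx1 hlt).elim
      · have hv : v1 = v2 := by rw [hd1, hd2, heqh]
        have hk : k1 = k2 := by omega
        rw [hv, hk]
      · rw [hb] at hd1 hd2 hGL
        exact (no_lt S hpc _ _ (k2 % 2) (by omega) (by omega) rfl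
          hd2 hd1 (by omega) (by omega) hvS1 hnx2 hlt).elim
    -- SurjOn
    have hsurj : Set.SurjOn Φ M T := by
      rintro ⟨u, j⟩ hT
      have hu : u ∈ S ∧ u ≠ [] ∧ j ≤ 1 ∧ (j = 0 → ∃ a, u ++ [a] ∈ S) := by
        rcases hT with ⟨w, hw, heq⟩ | ⟨w, hw, heq⟩ <;>
          · simp only [Prod.mk.injEq] at heq
            obtain ⟨h1, h2⟩ := heq
            subst h1; subst h2
            first
              | exact ⟨hw.1, hw.2, by omega, by omega⟩
              | exact ⟨hw.1, hw.2.1, by omega, fun _ => hw.2.2⟩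
      obtain ⟨huS, hune, hj, hch⟩ := hu
      have hbu : j ≤ u.length := by
        have := List.length_pos_iff.mpr hune
        omega
      have hGl : (u.take (u.length - j)).length = u.length - j := by
        rw [List.length_take]; omega
      set P : ℕ → Prop := fun h => u ++ (sufx (u.take (u.length - j)) h).reverse ∈ S with hP
      have hP0 : P 0 := by simp [hP, sufx_zero, huS]
      have hPh : P (Nat.findGreatest P (u.take (u.length - j)).length) :=
        Nat.findGreatest_spec (Nat.zero_le _) hP0
      have hhG : Nat.findGreatest P (u.take (u.length - j)).length
          ≤ (u.take (u.length - j)).length := Nat.findGreatest_le _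
      set h0 := Nat.findGreatest P (u.take (u.length - j)).length with hh0
      have hl : (sufx (u.take (u.length - j)) h0).length = h0 := sufx_length (by omega)
      have hvl : (u ++ (sufx (u.take (u.length - j)) h0).reverse).length = u.length + h0 := by
        simp [hl]
      refine ⟨(u ++ (sufx (u.take (u.length - j)) h0).reverse, 2 * h0 + j),
        (hMmem _ _).mpr ⟨hPh, by omega, ?_, ?_, ?_⟩, ?_⟩
      · exact construct_pal u j h0 hj hbu (by omega)
      · intro a haS hlen hpal
        rw [hvl] at hlen
        rw [show (u ++ (sufx (u.take (u.length - j)) h0).reverse).length - (2 * h0 + j) - 1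
            = ((u ++ (sufx (u.take (u.length - j)) h0).reverse) ++ [a]).length
              - (2 * (h0 + 1) + j) from by
          simp only [List.length_append, List.length_reverse, List.length_cons,
            List.length_nil, hl]
          omega] at hpal
        have hdec := decomp_pal ((u ++ (sufx (u.take (u.length - j)) h0).reverse) ++ [a])
          (2 * (h0 + 1) + j) (by
            simp only [List.length_append, List.length_reverse, List.length_cons,
              List.length_nil, hl]
            omega) hpal
        rw [show (2 * (h0 + 1) + j) / 2 = h0 + 1 from by omega,
          show (2 * (h0 + 1) + j) % 2 = j from by omega] at hdec
        have t1 : ((u ++ (sufx (u.take (u.length - j)) h0).reverse) ++ [a]).take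
            (((u ++ (sufx (u.take (u.length - j)) h0).reverse) ++ [a]).length - (h0 + 1))
            = u := by
          rw [show ((u ++ (sufx (u.take (u.length - j)) h0).reverse) ++ [a]).length - (h0 + 1)
              = u.length from by
            simp only [List.length_append, List.length_reverse, List.length_cons,
              List.length_nil, hl]
            omega]
          rw [List.append_assoc, List.take_left]
        rw [t1] at hdec
        rw [show (((u ++ (sufx (u.take (u.length - j)) h0).reverse) ++ [a]).length
            - (h0 + 1 + j)) = u.length - j from by
          simp only [List.length_append, List.length_reverse, List.length_cons,
            List.length_nil, hl]
          omega] at hdec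
        rw [List.append_assoc, List.take_append_of_le_length (by omega)] at hdec
        have hnew : P (h0 + 1) := by
          show u ++ (sufx (u.take (u.length - j)) (h0 + 1)).reverse ∈ S
          rw [List.append_assoc] at haS
          rw [← hdec]
          exact haS
        exact Nat.findGreatest_is_greatest (h0.lt_succ_self) (by omega) hnew
      · intro hk0
        have hj0 : j = 0 ∧ h0 = 0 := by omega
        rw [hj0.2, sufx_zero]
        simp only [List.reverse_nil, List.append_nil]
        exact ⟨hune, hch hj0.1⟩
      · show ((u ++ (sufx (u.take (u.length - j)) h0).reverse).take
            ((u ++ (sufx (u.take (u.length - j)) h0).reverse).length - (2 * h0 + j) / 2),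
            (2 * h0 + j) % 2) = (u, j)
        rw [hvl, show u.length + h0 - (2 * h0 + j) / 2 = u.length from by omega,
          show (2 * h0 + j) % 2 = j from by omega,
          List.take_append_of_le_length le_rfl, List.take_length]
    -- counting
    have hAfin : A.Finite := S.finite_toSet.subset (fun y hy => hy.1)
    have hBfin : B.Finite := S.finite_toSet.subset (fun y hy => hy.1)
    have hLfin : Lv.Finite := S.finite_toSet.subset (fun y hy => hy.1)
    have hbij : Set.BijOn Φ M T := ⟨hmaps, hinj, hsurj⟩
    have himg : Φ '' M = T := hbij.image_eq
    have hcount : M.ncard = T.ncard := by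
      rw [← himg, Set.ncard_image_of_injOn hinj]
    have hdisj : Disjoint ((fun u => (u, (1 : ℕ))) '' A) ((fun u => (u, (0 : ℕ))) '' B) := by
      rw [Set.disjoint_left]
      rintro p ⟨y, hy, rfl⟩ ⟨z, hz, hzy⟩
      simp at hzy
    have hTcard : T.ncard = A.ncard + B.ncard := by
      rw [hTdef, Set.ncard_union_eq hdisj (hAfin.image _) (hBfin.image _),
        Set.ncard_image_of_injective A (fun a b h => by simpa using h),
        Set.ncard_image_of_injective B (fun a b h => by simpa using h)]
    have hA : A = (S : Set (List α)) \ {[]} := by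
      ext y; simp [hAdef]
    have hAcard : A.ncard = S.card - 1 := by
      rw [hA, Set.ncard_diff_singleton_of_mem (by exact hroot),
        Set.ncard_coe_finset]
    have hLsub : Lv ⊆ A := by
      rintro y ⟨hyS, hyl⟩
      refine ⟨hyS, ?_⟩
      rintro rfl
      exact hyl c hrc
    have hBA : B = A \ Lv := by
      ext y
      simp only [hBdef, hAdef, hLvdef, Set.mem_diff, Set.mem_setOf_eq]
      constructor
      · rintro ⟨hyS, hyne, a, ha⟩
        exact ⟨⟨hyS, hyne⟩, fun h => h.2 a ha⟩
      · rintro ⟨⟨hyS, hyne⟩, h⟩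
        refine ⟨hyS, hyne, ?_⟩
        by_contra h2
        push_neg at h2
        exact h ⟨hyS, h2⟩
    have hBcard : B.ncard = A.ncard - Lv.ncard := by
      rw [hBA, Set.ncard_diff hLsub hLfin]
    have hLle : Lv.ncard ≤ A.ncard := Set.ncard_le_ncard hLsub hAfin
    rw [hcount, hTcard, hBcard, hAcard]
    rw [hAcard] at hLle
    omega
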